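/- For all natural numbers m, n, the polynomial identity 1 - x^(m+1) * ∑_{k=0}^{n} C(m+k, k) (1-x)^k = (1-x)^(n+1) * ∑_{k=0}^{m} C(n+k, k) x^k holds in ℤ[x]. -/

import Mathlib

open Polynomial Finset

private lemma geo (m : ℕ) :
    (1 - X : ℤ[X]) * ∑ k ∈ range (m + 1), X ^ k = 1 - X ^ (m + 1) := by
  induction m with
  | zero => simp
  | succ m ih =>
    rw [sum_range_succ, mul_add, ih]
    ring

private lemma key (m n : ℕ) :
    (∑ k ∈ range (m + 1), C (((n + k).choose k : ℤ)) * X ^ k)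
      - C (((m + n + 1).choose (n + 1) : ℤ)) * X ^ (m + 1)
    = (1 - X) * ∑ k ∈ range (m + 1), C (((n + 1 + k).choose k : ℤ)) * X ^ k := by
  induction m with
  | zero => simp [Nat.choose_self]
  | succ m ih =>
    rw [sum_range_succ, sum_range_succ (f := fun k => C (((n + 1 + k).choose k : ℤ)) * X ^ k),
      mul_add, ← ih]
    have h1 : (n + (m + 1)).choose (m + 1) = (m + n + 1).choose n := by
      rw [show n + (m + 1) = m + n + 1 by ring, ← Nat.choose_symm (show m + 1 ≤ m + n + 1 by omega)]
      congr 1; omega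
    have h2 : (m + n + 1).choose n + (m + n + 1).choose (n + 1)
        = (m + 1 + n + 1).choose (n + 1) := by
      rw [show m + 1 + n + 1 = (m + n + 1) + 1 by ring]
      conv_rhs => rw [Nat.choose_succ_succ']
    have h3 : (n + 1 + (m + 1)).choose (m + 1) = (m + 1 + n + 1).choose (n + 1) := by
      rw [show n + 1 + (m + 1) = m + 1 + n + 1 by ring,
        ← Nat.choose_symm (show m + 1 ≤ m + 1 + n + 1 by omega)]
      congr 1; omega
    rw [h1, h3, ← h2]
    push_cast
    simp only [map_add]
    ring

open Polynomial in
theorem chaundy_bullard_int_poly (m n : ℕ) :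
    (1 : ℤ[X]) - X ^ (m + 1) * ∑ k ∈ Finset.range (n + 1), C ((m + k).choose k : ℤ) * (1 - X) ^ k
      = (1 - X) ^ (n + 1) * ∑ k ∈ Finset.range (m + 1), C ((n + k).choose k : ℤ) * X ^ k := by
  induction n with
  | zero =>
    have := geo m
    simp only [zero_add, Nat.choose_self, Nat.add_zero, Nat.choose_zero_right, Nat.cast_one,
      map_one, one_mul, pow_one, Finset.sum_range_one, pow_zero, mul_one]
    linear_combination -this
  | succ n ih =>
    rw [sum_range_succ, mul_add, ← sub_sub, ih,
      show (m + (n + 1)).choose (n + 1) = (m + n + 1).choose (n + 1) from rfl]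
    linear_combination (1 - X : ℤ[X]) ^ (n + 1) * key m n
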